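/- Let G be a group, p a prime and m ≥ 1. Let ρ_m : G → GSp₄(ℤ/p^mℤ) and ψ : G → (ℤ/p^{m+1}ℤ)ˣ be group homomorphisms, let ϱ : G → GSp₄(ℤ/p^{m+1}ℤ) be a function whose reduction mod p^m equals ρ_m and with ν ∘ ϱ = ψ, and let c : G × G → sp₄(𝔽_p) be the obstruction 2-cocycle defined by ϱ(g)ϱ(h)ϱ(gh)⁻¹ = 1 + p^m·c̃(g,h). Then there exists a group homomorphism ρ_{m+1} : G → GSp₄(ℤ/p^{m+1}ℤ) whose reduction mod p^m is ρ_m and with ν ∘ ρ_{m+1} = ψ, if and only if c is a coboundary, i.e. there exists a function φ : G → sp₄(𝔽_p) such that c(g,h) = ρ̄(g)·φ(h)·ρ̄(g)⁻¹ − φ(gh) + φ(g) for all g, h ∈ G, where ρ̄ is the mod-p reduction of ρ_m. -/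

import Mathlib

open Matrix

/-- The 4×4 matrix `J` given in 2×2 blocks by `[[0, I₂], [−I₂, 0]]`. -/
def Jmat (R : Type*) [CommRing R] : Matrix (Fin 4) (Fin 4) R :=
  !![0, 0, 1, 0; 0, 0, 0, 1; -1, 0, 0, 0; 0, -1, 0, 0]


namespace GSpLiftAux

variable (p m : ℕ)

def ee (x : ZMod p) : ZMod (p^(m+1)) := (x.val : ZMod (p^(m+1)))

def dd (x : ZMod (p^(m+1))) : ZMod p := ((x.val / p^m : ℕ) : ZMod p)

def qq : ZMod (p^(m+1)) := (p : ZMod (p^(m+1)))^m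

lemma q_mul_p : qq p m * (p : ZMod (p^(m+1))) = 0 := by
  have : ((p^(m+1) : ℕ) : ZMod (p^(m+1))) = 0 := ZMod.natCast_self _
  rw [qq, ← Nat.cast_pow, ← Nat.cast_mul, ← pow_succ, this]

variable [Fact p.Prime]

lemma pNeZero : NeZero p := ⟨(Fact.out : p.Prime).ne_zero⟩

lemma pmNeZero : NeZero (p^(m+1)) := ⟨pow_ne_zero _ (Fact.out : p.Prime).ne_zero⟩

lemma q_mul_q (hm : 1 ≤ m) : qq p m * qq p m = 0 := by
  haveI := pmNeZero p m
  rw [qq, ← pow_add, ← Nat.cast_pow, ZMod.natCast_eq_zero_iff]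
  exact pow_dvd_pow p (by omega)

def piF : ZMod (p^(m+1)) →+* ZMod p := ZMod.castHom (dvd_pow_self p (Nat.succ_ne_zero m)) (ZMod p)

def piS : ZMod (p^(m+1)) →+* ZMod (p^m) :=
  ZMod.castHom (pow_dvd_pow p (Nat.le_succ m)) (ZMod (p^m))

lemma piF_val (x : ZMod (p^(m+1))) : piF p m x = (x.val : ZMod p) := by
  rw [piF, ZMod.castHom_apply, ← ZMod.natCast_val]

lemma piS_val (x : ZMod (p^(m+1))) : piS p m x = (x.val : ZMod (p^m)) := by
  rw [piS, ZMod.castHom_apply, ← ZMod.natCast_val]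

lemma q_mul_eq (x : ZMod (p^(m+1))) : qq p m * x = qq p m * ee p m (piF p m x) := by
  haveI := pmNeZero p m
  haveI := pNeZero p
  have hx : ((x.val : ℕ) : ZMod (p^(m+1))) = x := by
    rw [ZMod.natCast_val, ZMod.cast_id]
  have h1 : (piF p m x).val = x.val % p := by rw [piF_val, ZMod.val_natCast]
  rw [ee, h1]
  conv_lhs => rw [← hx, ← Nat.mod_add_div x.val p]
  rw [Nat.cast_add, Nat.cast_mul, mul_add, ← mul_assoc, q_mul_p, zero_mul, add_zero]

lemma piF_ee (a : ZMod p) : piF p m (ee p m a) = a := by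
  haveI := pNeZero p
  rw [ee, piF_val, ZMod.val_natCast, Nat.mod_eq_of_lt, ZMod.natCast_val, ZMod.cast_id]
  calc a.val < p := a.val_lt
    _ ≤ p^(m+1) := Nat.le_self_pow (Nat.succ_ne_zero m) p

lemma q_e_add (a b : ZMod p) :
    qq p m * ee p m (a + b) = qq p m * ee p m a + qq p m * ee p m b := by
  have h := q_mul_eq p m (ee p m a + ee p m b)
  rw [map_add, piF_ee, piF_ee, mul_add] at h
  exact h.symm

lemma q_e_mul_left (y : ZMod (p^(m+1))) (a : ZMod p) :
    y * (qq p m * ee p m a) = qq p m * ee p m (piF p m y * a) := by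
  have h := q_mul_eq p m (y * ee p m a)
  rw [_root_.map_mul, piF_ee] at h
  rw [← h]; ring

lemma q_e_mul_right (y : ZMod (p^(m+1))) (a : ZMod p) :
    (qq p m * ee p m a) * y = qq p m * ee p m (a * piF p m y) := by
  rw [mul_comm, q_e_mul_left, mul_comm a]

lemma q_e_inj (hm : 1 ≤ m) {a b : ZMod p} (h : qq p m * ee p m a = qq p m * ee p m b) :
    a = b := by
  haveI := pNeZero p
  haveI := pmNeZero p m
  have hpm : 0 < p^m := pow_pos (Fact.out : p.Prime).pos m
  have h' : ((p^m * a.val : ℕ) : ZMod (p^(m+1))) = ((p^m * b.val : ℕ) : ZMod (p^(m+1))) := by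
    rw [Nat.cast_mul, Nat.cast_mul, Nat.cast_pow]
    exact h
  rw [ZMod.natCast_eq_natCast_iff] at h'
  have ha : p^m * a.val < p^(m+1) := by
    rw [pow_succ]; exact (Nat.mul_lt_mul_left hpm).mpr a.val_lt
  have hb : p^m * b.val < p^(m+1) := by
    rw [pow_succ]; exact (Nat.mul_lt_mul_left hpm).mpr b.val_lt
  have := h'
  rw [Nat.ModEq, Nat.mod_eq_of_lt ha, Nat.mod_eq_of_lt hb] at this
  have hv : a.val = b.val := Nat.eq_of_mul_eq_mul_left hpm this
  have : ((a.val : ℕ) : ZMod p) = ((b.val : ℕ) : ZMod p) := by rw [hv]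
  rwa [ZMod.natCast_val, ZMod.cast_id, ZMod.natCast_val, ZMod.cast_id] at this

lemma eq_q_e_dd (x : ZMod (p^(m+1))) (hx : piS p m x = 0) :
    qq p m * ee p m (dd p m x) = x := by
  haveI := pNeZero p
  haveI := pmNeZero p m
  haveI : NeZero (p^m) := ⟨pow_ne_zero _ (Fact.out : p.Prime).ne_zero⟩
  rw [piS_val, ZMod.natCast_eq_zero_iff] at hx
  have hlt : x.val / p^m < p := by
    apply Nat.div_lt_of_lt_mul
    rw [← pow_succ]
    exact x.val_lt
  rw [ee, dd, ZMod.val_natCast, Nat.mod_eq_of_lt hlt, qq, ← Nat.cast_pow, ← Nat.cast_mul,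
    Nat.mul_div_cancel' hx, ZMod.natCast_val, ZMod.cast_id]

end GSpLiftAux

namespace GSpLiftAux

variable (p m : ℕ)

lemma ee_zero : ee p m 0 = 0 := by
  simp [ee]

def TT (X : Matrix (Fin 4) (Fin 4) (ZMod p)) : Matrix (Fin 4) (Fin 4) (ZMod (p^(m+1))) :=
  qq p m • X.map (ee p m)

lemma TT_apply (X : Matrix (Fin 4) (Fin 4) (ZMod p)) (i j : Fin 4) :
    TT p m X i j = qq p m * ee p m (X i j) := by
  simp [TT, Matrix.smul_apply, Matrix.map_apply, smul_eq_mul]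

variable [Fact p.Prime]

lemma TT_add (X Y : Matrix (Fin 4) (Fin 4) (ZMod p)) :
    TT p m (X + Y) = TT p m X + TT p m Y := by
  ext i j
  rw [Matrix.add_apply, TT_apply, TT_apply, TT_apply, Matrix.add_apply, q_e_add]

lemma q_e_neg (a : ZMod p) : qq p m * ee p m (-a) = -(qq p m * ee p m a) := by
  have := q_e_add p m a (-a)
  rw [add_neg_cancel, ee_zero, mul_zero] at this
  linear_combination -this

lemma TT_neg (X : Matrix (Fin 4) (Fin 4) (ZMod p)) : TT p m (-X) = -(TT p m X) := by
  ext i j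
  rw [Matrix.neg_apply, TT_apply, TT_apply, Matrix.neg_apply, q_e_neg]

lemma TT_sub (X Y : Matrix (Fin 4) (Fin 4) (ZMod p)) :
    TT p m (X - Y) = TT p m X - TT p m Y := by
  rw [sub_eq_add_neg, sub_eq_add_neg, TT_add, TT_neg]

lemma q_e_sum {ι : Type*} (s : Finset ι) (f : ι → ZMod p) :
    qq p m * ee p m (∑ i ∈ s, f i) = ∑ i ∈ s, qq p m * ee p m (f i) := by
  classical
  induction s using Finset.cons_induction with
  | empty => rw [Finset.sum_empty, Finset.sum_empty, ee_zero, mul_zero]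
  | cons a s ha ih => rw [Finset.sum_cons, Finset.sum_cons, q_e_add, ih]

lemma mul_TT (M : Matrix (Fin 4) (Fin 4) (ZMod (p^(m+1)))) (X : Matrix (Fin 4) (Fin 4) (ZMod p)) :
    M * TT p m X = TT p m (M.map (piF p m) * X) := by
  ext i j
  rw [Matrix.mul_apply, TT_apply, Matrix.mul_apply, q_e_sum]
  refine Finset.sum_congr rfl fun k _ => ?_
  rw [TT_apply, q_e_mul_left, Matrix.map_apply]

lemma TT_mul (X : Matrix (Fin 4) (Fin 4) (ZMod p)) (M : Matrix (Fin 4) (Fin 4) (ZMod (p^(m+1)))) :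
    TT p m X * M = TT p m (X * M.map (piF p m)) := by
  ext i j
  rw [Matrix.mul_apply, TT_apply, Matrix.mul_apply, q_e_sum]
  refine Finset.sum_congr rfl fun k _ => ?_
  rw [TT_apply, q_e_mul_right, Matrix.map_apply]

lemma TT_mul_TT (hm : 1 ≤ m) (X Y : Matrix (Fin 4) (Fin 4) (ZMod p)) :
    TT p m X * TT p m Y = 0 := by
  ext i j
  rw [Matrix.mul_apply, Matrix.zero_apply]
  refine Finset.sum_eq_zero fun k _ => ?_
  rw [TT_apply, TT_apply, mul_mul_mul_comm, q_mul_q p m hm, zero_mul]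

lemma TT_transpose (X : Matrix (Fin 4) (Fin 4) (ZMod p)) : (TT p m X)ᵀ = TT p m Xᵀ := by
  ext i j
  rw [Matrix.transpose_apply, TT_apply, TT_apply, Matrix.transpose_apply]

lemma piS_q : piS p m (qq p m) = 0 := by
  rw [qq, map_pow, map_natCast, ← Nat.cast_pow, ZMod.natCast_self]

lemma piF_q (hm : 1 ≤ m) : piF p m (qq p m) = 0 := by
  rw [qq, map_pow, map_natCast, ZMod.natCast_self, zero_pow (by omega : m ≠ 0)]

lemma TT_map_S (X : Matrix (Fin 4) (Fin 4) (ZMod p)) : (TT p m X).map (piS p m) = 0 := by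
  ext i j
  rw [Matrix.map_apply, TT_apply, _root_.map_mul, piS_q, zero_mul, Matrix.zero_apply]

lemma TT_map_F (hm : 1 ≤ m) (X : Matrix (Fin 4) (Fin 4) (ZMod p)) :
    (TT p m X).map (piF p m) = 0 := by
  ext i j
  rw [Matrix.map_apply, TT_apply, _root_.map_mul, piF_q p m hm, zero_mul, Matrix.zero_apply]

lemma TT_inj (hm : 1 ≤ m) {X Y : Matrix (Fin 4) (Fin 4) (ZMod p)}
    (h : TT p m X = TT p m Y) : X = Y := by
  ext i j
  refine q_e_inj p m hm ?_
  rw [← TT_apply, ← TT_apply, h]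

lemma eq_TT_of_map_zero (M : Matrix (Fin 4) (Fin 4) (ZMod (p^(m+1))))
    (h : M.map (piS p m) = 0) : M = TT p m (M.map (dd p m)) := by
  ext i j
  rw [TT_apply, Matrix.map_apply, eq_q_e_dd]
  have : M.map (piS p m) i j = (0 : Matrix (Fin 4) (Fin 4) (ZMod (p^m))) i j := by rw [h]
  rwa [Matrix.map_apply, Matrix.zero_apply] at this

end GSpLiftAux

namespace GSpLiftAux

variable (p m : ℕ) [Fact p.Prime]

lemma TT_zero : TT p m (0 : Matrix (Fin 4) (Fin 4) (ZMod p)) = 0 := by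
  ext i j
  rw [TT_apply, Matrix.zero_apply, Matrix.zero_apply, ee_zero, mul_zero]

lemma Jmat_map {R S : Type*} [CommRing R] [CommRing S] (f : R →+* S) :
    (Jmat R).map f = Jmat S := by
  ext i j
  fin_cases i <;> fin_cases j <;> simp [Jmat, Matrix.map_apply, Matrix.vecHead, Matrix.vecTail]

lemma Jmat_det {R : Type*} [CommRing R] : (Jmat R).det = 1 := by
  simp [Jmat, Matrix.det_succ_row_zero, Fin.sum_univ_succ, Fin.succAbove]

lemma isUnit_det_of_sim {R : Type*} [CommRing R] (A : Matrix (Fin 4) (Fin 4) R) (u : Rˣ)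
    (h : Aᵀ * Jmat R * A = (u : R) • Jmat R) : IsUnit A.det := by
  have hdet := congrArg Matrix.det h
  rw [Matrix.det_mul, Matrix.det_mul, Matrix.det_transpose, Jmat_det, mul_one,
    Matrix.det_smul, Jmat_det, mul_one] at hdet
  have hu : IsUnit ((u : R) ^ Fintype.card (Fin 4)) := u.isUnit.pow _
  rw [← hdet] at hu
  exact isUnit_of_mul_isUnit_left hu

lemma conj_cancel {R : Type*} [CommRing R] {A M N : Matrix (Fin 4) (Fin 4) R}
    (hA : IsUnit A.det) (h : Aᵀ * M * A = Aᵀ * N * A) : M = N := by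
  have hAT : IsUnit Aᵀ.det := by rwa [Matrix.det_transpose]
  have h1 : Aᵀ * M = Aᵀ * N := by
    have h0 := congrArg (· * A⁻¹) h
    rwa [Matrix.mul_nonsing_inv_cancel_right _ _ hA,
      Matrix.mul_nonsing_inv_cancel_right _ _ hA] at h0
  have h2 := congrArg (Aᵀ⁻¹ * ·) h1
  rwa [← Matrix.mul_assoc, ← Matrix.mul_assoc, Matrix.nonsing_inv_mul _ hAT, one_mul,
    one_mul] at h2

lemma sym_expand (hm : 1 ≤ m) (X : Matrix (Fin 4) (Fin 4) (ZMod p)) :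
    (1 + TT p m X)ᵀ * Jmat (ZMod (p^(m+1))) * (1 + TT p m X)
      = Jmat (ZMod (p^(m+1))) + TT p m (Xᵀ * Jmat (ZMod p) + Jmat (ZMod p) * X) := by
  rw [Matrix.transpose_add, Matrix.transpose_one, TT_transpose]
  have e1 : TT p m Xᵀ * Jmat (ZMod (p^(m+1))) = TT p m (Xᵀ * Jmat (ZMod p)) := by
    rw [TT_mul, Jmat_map]
  have e2 : Jmat (ZMod (p^(m+1))) * TT p m X = TT p m (Jmat (ZMod p) * X) := by
    rw [mul_TT, Jmat_map]
  calc (1 + TT p m Xᵀ) * Jmat (ZMod (p^(m+1))) * (1 + TT p m X)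
      = Jmat (ZMod (p^(m+1))) + TT p m Xᵀ * Jmat (ZMod (p^(m+1)))
        + (Jmat (ZMod (p^(m+1))) * TT p m X
          + TT p m Xᵀ * Jmat (ZMod (p^(m+1))) * TT p m X) := by noncomm_ring
    _ = Jmat (ZMod (p^(m+1))) + TT p m (Xᵀ * Jmat (ZMod p))
        + (TT p m (Jmat (ZMod p) * X) + TT p m (Xᵀ * Jmat (ZMod p)) * TT p m X) := by
          rw [e1, e2]
    _ = Jmat (ZMod (p^(m+1))) + TT p m (Xᵀ * Jmat (ZMod p) + Jmat (ZMod p) * X) := by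
          rw [TT_mul_TT p m hm, add_zero, TT_add, add_assoc]

end GSpLiftAux

open GSpLiftAux

/-- A homomorphism `ρ_m : G → GSp₄(ℤ/p^mℤ)` admits a homomorphic lift
`ρ_{m+1} : G → GSp₄(ℤ/p^{m+1}ℤ)` with similitude character `ψ` if and only if the
obstruction 2-cocycle `c` (defined via a set-theoretic lift `ϱ` with `ν ∘ ϱ = ψ` by
`ϱ(g)ϱ(h)ϱ(gh)⁻¹ = 1 + p^m·c̃(g,h)`) is a coboundary. -/
theorem lift_exists_iff_coboundary (p : ℕ) [Fact p.Prime] (m : ℕ) (hm : 1 ≤ m)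
    (G : Type*) [Group G]
    (ρm : G → Matrix (Fin 4) (Fin 4) (ZMod (p ^ m)))
    (hρone : ρm 1 = 1)
    (hρmul : ∀ g h : G, ρm (g * h) = ρm g * ρm h)
    (ψ : G →* (ZMod (p ^ (m + 1)))ˣ)
    (ϱ : G → Matrix (Fin 4) (Fin 4) (ZMod (p ^ (m + 1))))
    (hred : ∀ g : G,
      (ϱ g).map (ZMod.castHom (pow_dvd_pow p (by omega : m ≤ m + 1)) (ZMod (p ^ m))) = ρm g)
    (hν : ∀ g : G,
      (ϱ g)ᵀ * Jmat (ZMod (p ^ (m + 1))) * ϱ g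
        = ((ψ g : (ZMod (p ^ (m + 1)))ˣ) : ZMod (p ^ (m + 1))) • Jmat (ZMod (p ^ (m + 1))))
    (c : G → G → Matrix (Fin 4) (Fin 4) (ZMod p))
    (hc : ∀ g h : G,
      (c g h)ᵀ * Jmat (ZMod p) + Jmat (ZMod p) * c g h = 0 ∧
      ϱ g * ϱ h * (ϱ (g * h))⁻¹
        = 1 + ((p : ZMod (p ^ (m + 1))) ^ m) •
            (c g h).map (fun x => (x.val : ZMod (p ^ (m + 1))))) :
    (∃ ρ' : G → Matrix (Fin 4) (Fin 4) (ZMod (p ^ (m + 1))),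
      (∀ g h : G, ρ' (g * h) = ρ' g * ρ' h) ∧
      (∀ g : G,
        (ρ' g).map (ZMod.castHom (pow_dvd_pow p (by omega : m ≤ m + 1)) (ZMod (p ^ m)))
          = ρm g) ∧
      (∀ g : G,
        (ρ' g)ᵀ * Jmat (ZMod (p ^ (m + 1))) * ρ' g
          = ((ψ g : (ZMod (p ^ (m + 1)))ˣ) : ZMod (p ^ (m + 1))) • Jmat (ZMod (p ^ (m + 1)))))
    ↔
    (∃ φ : G → Matrix (Fin 4) (Fin 4) (ZMod p),
      (∀ g : G, (φ g)ᵀ * Jmat (ZMod p) + Jmat (ZMod p) * φ g = 0) ∧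
      (∀ g h : G,
        c g h
          = (ρm g).map (ZMod.castHom (dvd_pow_self p (by omega : m ≠ 0)) (ZMod p)) * φ h *
              ((ρm g).map (ZMod.castHom (dvd_pow_self p (by omega : m ≠ 0)) (ZMod p)))⁻¹
            - φ (g * h) + φ g)) := by
  classical
  haveI := pNeZero p
  haveI := pmNeZero p m
  haveI : NeZero (p ^ m) := ⟨pow_ne_zero _ (Fact.out : p.Prime).ne_zero⟩
  set ρb : G → Matrix (Fin 4) (Fin 4) (ZMod p) :=
    fun g => (ρm g).map (ZMod.castHom (dvd_pow_self p (by omega : m ≠ 0)) (ZMod p)) with hρbdef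
  have hρbmul : ∀ g h : G, ρb (g * h) = ρb g * ρb h := by
    intro g h
    show (ρm (g * h)).map _ = (ρm g).map _ * (ρm h).map _
    rw [hρmul, Matrix.map_mul]
  have hρbone : ρb 1 = 1 := by
    show (ρm 1).map _ = 1
    rw [hρone, Matrix.map_one _ (map_zero _) (map_one _)]
  have hmulinv : ∀ g : G, ρb g * ρb g⁻¹ = 1 := by
    intro g
    rw [← hρbmul, mul_inv_cancel, hρbone]
  have hginv : ∀ g : G, ρb g⁻¹ * ρb g = 1 := by
    intro g
    have := hmulinv g⁻¹
    rwa [inv_inv] at this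
  have hρbinv : ∀ g : G, (ρb g)⁻¹ = ρb g⁻¹ := fun g => Matrix.inv_eq_right_inv (hmulinv g)
  have hredS : ∀ g : G, (ϱ g).map (piS p m) = ρm g := hred
  have hcast : ∀ x : ZMod (p ^ (m + 1)),
      ZMod.castHom (dvd_pow_self p (by omega : m ≠ 0)) (ZMod p) (piS p m x) = piF p m x := by
    intro x
    rw [piS_val, piF_val, ZMod.castHom_apply, ← ZMod.natCast_val, ZMod.val_natCast]
    exact ((ZMod.natCast_eq_natCast_iff _ _ _).mpr
      (Nat.mod_mod_of_dvd x.val (dvd_pow_self p (by omega))).symm).symm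
  have hϱF : ∀ g : G, (ϱ g).map (piF p m) = ρb g := by
    intro g
    show _ = (ρm g).map _
    rw [← hredS g, Matrix.map_map]
    ext i j
    simp only [Matrix.map_apply, Function.comp_apply]
    exact (hcast _).symm
  have hϱdet : ∀ g : G, IsUnit (ϱ g).det := fun g => isUnit_det_of_sim _ (ψ g) (hν g)
  have hc2 : ∀ g h : G, ϱ g * ϱ h * (ϱ (g * h))⁻¹ = 1 + TT p m (c g h) :=
    fun g h => (hc g h).2
  have hcmul : ∀ g h : G, ϱ g * ϱ h = (1 + TT p m (c g h)) * ϱ (g * h) := by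
    intro g h
    rw [← hc2 g h]
    exact (Matrix.nonsing_inv_mul_cancel_right _ _ (hϱdet (g * h))).symm
  have mapF_add : ∀ A B : Matrix (Fin 4) (Fin 4) (ZMod (p ^ (m + 1))),
      (A + B).map (piF p m) = A.map (piF p m) + B.map (piF p m) :=
    fun A B => Matrix.map_add _ (map_add _) A B
  have expand : ∀ (X : Matrix (Fin 4) (Fin 4) (ZMod p)) (g : G),
      (1 + TT p m X) * ϱ g = ϱ g + TT p m (X * ρb g) := by
    intro X g
    rw [add_mul, one_mul, TT_mul, hϱF]
  have master : ∀ (X Y : Matrix (Fin 4) (Fin 4) (ZMod p)) (g h : G),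
      (1 + TT p m X) * ϱ g * ((1 + TT p m Y) * ϱ h)
        = ϱ (g * h) + TT p m (c g h * ρb (g * h) + ρb g * (Y * ρb h) + X * ρb (g * h)) := by
    intro X Y g h
    calc (1 + TT p m X) * ϱ g * ((1 + TT p m Y) * ϱ h)
        = (1 + TT p m X) * (ϱ g * (ϱ h + TT p m (Y * ρb h))) := by
          rw [expand Y h, Matrix.mul_assoc]
      _ = (1 + TT p m X) * (ϱ g * ϱ h + TT p m (ρb g * (Y * ρb h))) := by
          rw [mul_add, mul_TT, hϱF]
      _ = (1 + TT p m X)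
          * (ϱ (g * h) + TT p m (c g h * ρb (g * h)) + TT p m (ρb g * (Y * ρb h))) := by
          rw [hcmul g h, expand (c g h) (g * h)]
      _ = ϱ (g * h) + TT p m (c g h * ρb (g * h)) + TT p m (ρb g * (Y * ρb h))
          + TT p m X
            * (ϱ (g * h) + TT p m (c g h * ρb (g * h)) + TT p m (ρb g * (Y * ρb h))) := by
          rw [add_mul, one_mul]
      _ = ϱ (g * h) + TT p m (c g h * ρb (g * h)) + TT p m (ρb g * (Y * ρb h))
          + TT p m (X * ρb (g * h)) := by
          rw [TT_mul, mapF_add, mapF_add, TT_map_F p m hm, TT_map_F p m hm, hϱF,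
            add_zero, add_zero]
      _ = ϱ (g * h) + TT p m (c g h * ρb (g * h) + ρb g * (Y * ρb h) + X * ρb (g * h)) := by
          rw [TT_add, TT_add]
          abel
  constructor
  · rintro ⟨ρ', hρ'mul, hρ'red, hρ'ν⟩
    set Δ : G → Matrix (Fin 4) (Fin 4) (ZMod (p ^ (m + 1))) := fun g => ρ' g * (ϱ g)⁻¹ with hΔdef
    have hΔϱ : ∀ g : G, ρ' g = Δ g * ϱ g :=
      fun g => (Matrix.nonsing_inv_mul_cancel_right _ _ (hϱdet g)).symm
    have hρunit : ∀ g : G, ρm g * ρm g⁻¹ = 1 := by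
      intro g
      rw [← hρmul, mul_inv_cancel, hρone]
    have hΔS : ∀ g : G, (Δ g).map (piS p m) = 1 := by
      intro g
      have h1 : (Δ g).map (piS p m) * ρm g = ρm g := by
        rw [← hredS g, ← Matrix.map_mul, ← hΔϱ g]
        exact (hρ'red g).trans (hredS g).symm
      calc (Δ g).map (piS p m) = (Δ g).map (piS p m) * (ρm g * ρm g⁻¹) := by
            rw [hρunit, mul_one]
        _ = (Δ g).map (piS p m) * ρm g * ρm g⁻¹ := by rw [Matrix.mul_assoc]
        _ = ρm g * ρm g⁻¹ := by rw [h1]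
        _ = 1 := hρunit g
    set φ0 : G → Matrix (Fin 4) (Fin 4) (ZMod p) := fun g => (Δ g - 1).map (dd p m) with hφ0def
    have hΔeq : ∀ g : G, Δ g = 1 + TT p m (φ0 g) := by
      intro g
      have hz : (Δ g - 1).map (piS p m) = 0 := by
        rw [Matrix.map_sub _ (map_sub _), hΔS g, Matrix.map_one _ (map_zero _) (map_one _),
          sub_self]
      have h2 := eq_TT_of_map_zero p m (Δ g - 1) hz
      show Δ g = 1 + TT p m ((Δ g - 1).map (dd p m))
      rw [← h2]
      abel
    have hsp0 : ∀ g : G, (φ0 g)ᵀ * Jmat (ZMod p) + Jmat (ZMod p) * φ0 g = 0 := by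
      intro g
      have hJd : (Δ g)ᵀ * Jmat (ZMod (p ^ (m + 1))) * Δ g = Jmat (ZMod (p ^ (m + 1))) := by
        refine conj_cancel (hϱdet g) ?_
        calc (ϱ g)ᵀ * ((Δ g)ᵀ * Jmat (ZMod (p ^ (m + 1))) * Δ g) * ϱ g
            = (Δ g * ϱ g)ᵀ * Jmat (ZMod (p ^ (m + 1))) * (Δ g * ϱ g) := by
              simp only [Matrix.transpose_mul, Matrix.mul_assoc]
          _ = (ρ' g)ᵀ * Jmat (ZMod (p ^ (m + 1))) * ρ' g := by rw [← hΔϱ g]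
          _ = ((ψ g : (ZMod (p ^ (m + 1)))ˣ) : ZMod (p ^ (m + 1))) • Jmat (ZMod (p ^ (m + 1))) :=
              hρ'ν g
          _ = (ϱ g)ᵀ * Jmat (ZMod (p ^ (m + 1))) * ϱ g := (hν g).symm
      rw [hΔeq g, sym_expand p m hm] at hJd
      have hz : TT p m ((φ0 g)ᵀ * Jmat (ZMod p) + Jmat (ZMod p) * φ0 g) = 0 := by
        rwa [add_eq_left] at hJd
      exact TT_inj p m hm (hz.trans (TT_zero p m).symm)
    have hkey : ∀ g h : G, φ0 (g * h) * ρb (g * h)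
        = c g h * ρb (g * h) + ρb g * (φ0 h * ρb h) + φ0 g * ρb (g * h) := by
      intro g h
      have H := hρ'mul g h
      rw [hΔϱ (g * h), hΔϱ g, hΔϱ h, hΔeq (g * h), hΔeq g, hΔeq h,
        expand (φ0 (g * h)) (g * h), master (φ0 g) (φ0 h) g h] at H
      exact TT_inj p m hm (add_left_cancel H)
    refine ⟨fun g => -φ0 g, ?_, ?_⟩
    · intro g
      show (-φ0 g)ᵀ * Jmat (ZMod p) + Jmat (ZMod p) * (-φ0 g) = 0
      rw [Matrix.transpose_neg, Matrix.neg_mul, Matrix.mul_neg, ← neg_add, hsp0 g, neg_zero]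
    · intro g h
      show c g h = ρb g * (-φ0 h) * (ρb g)⁻¹ - (-φ0 (g * h)) + (-φ0 g)
      rw [hρbinv g]
      have e4 : c g h * ρb (g * h) * ρb ((g * h)⁻¹) = c g h := by
        rw [Matrix.mul_assoc, hmulinv, mul_one]
      have e5 : φ0 g * ρb (g * h) * ρb ((g * h)⁻¹) = φ0 g := by
        rw [Matrix.mul_assoc, hmulinv, mul_one]
      have e6 : φ0 (g * h) * ρb (g * h) * ρb ((g * h)⁻¹) = φ0 (g * h) := by
        rw [Matrix.mul_assoc, hmulinv, mul_one]
      have e7 : ρb g * (φ0 h * ρb h) * ρb ((g * h)⁻¹) = ρb g * φ0 h * ρb g⁻¹ := by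
        have h8 : ρb h * ρb ((g * h)⁻¹) = ρb g⁻¹ := by
          rw [← hρbmul]
          congr 1
          group
        rw [Matrix.mul_assoc (ρb g), Matrix.mul_assoc (φ0 h), h8, ← Matrix.mul_assoc]
      have final := congrArg (· * ρb ((g * h)⁻¹)) (hkey g h)
      simp only [add_mul] at final
      rw [e4, e5, e6, e7] at final
      rw [Matrix.mul_neg, Matrix.neg_mul, sub_neg_eq_add, final]
      abel
  · rintro ⟨φ, hφsp, hφcob⟩
    have hφcob' : ∀ g h : G, c g h = ρb g * φ h * (ρb g)⁻¹ - φ (g * h) + φ g := hφcob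
    refine ⟨fun g => (1 + TT p m (-φ g)) * ϱ g, ?_, ?_, ?_⟩
    · intro g h
      show (1 + TT p m (-φ (g * h))) * ϱ (g * h)
          = (1 + TT p m (-φ g)) * ϱ g * ((1 + TT p m (-φ h)) * ϱ h)
      rw [expand, master]
      have hF : c g h * ρb (g * h) + ρb g * (-φ h * ρb h) + -φ g * ρb (g * h)
          = -φ (g * h) * ρb (g * h) := by
        rw [hφcob' g h, hρbinv g, hρbmul g h]
        have hA : ρb g * φ h * ρb g⁻¹ * (ρb g * ρb h) = ρb g * (φ h * ρb h) := by
          rw [Matrix.mul_assoc (ρb g * φ h), ← Matrix.mul_assoc (ρb g⁻¹), hginv g, one_mul,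
            Matrix.mul_assoc]
        rw [add_mul, sub_mul, hA]
        simp only [Matrix.neg_mul, Matrix.mul_neg]
        abel
      rw [hF]
    · intro g
      show ((1 + TT p m (-φ g)) * ϱ g).map (piS p m) = ρm g
      have h1 : (1 + TT p m (-φ g)).map (piS p m) = 1 := by
        rw [Matrix.map_add _ (map_add _), TT_map_S, Matrix.map_one _ (map_zero _) (map_one _),
          add_zero]
      rw [Matrix.map_mul, h1, one_mul, hredS]
    · intro g
      show ((1 + TT p m (-φ g)) * ϱ g)ᵀ * Jmat (ZMod (p ^ (m + 1)))
            * ((1 + TT p m (-φ g)) * ϱ g)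
          = ((ψ g : (ZMod (p ^ (m + 1)))ˣ) : ZMod (p ^ (m + 1))) • Jmat (ZMod (p ^ (m + 1)))
      have hinner : (1 + TT p m (-φ g))ᵀ * Jmat (ZMod (p ^ (m + 1))) * (1 + TT p m (-φ g))
          = Jmat (ZMod (p ^ (m + 1))) := by
        rw [sym_expand p m hm, Matrix.transpose_neg, Matrix.neg_mul, Matrix.mul_neg, ← neg_add,
          hφsp g, neg_zero, TT_zero, add_zero]
      calc ((1 + TT p m (-φ g)) * ϱ g)ᵀ * Jmat (ZMod (p ^ (m + 1)))
            * ((1 + TT p m (-φ g)) * ϱ g)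
          = (ϱ g)ᵀ * ((1 + TT p m (-φ g))ᵀ * Jmat (ZMod (p ^ (m + 1))) * (1 + TT p m (-φ g)))
            * ϱ g := by
            simp only [Matrix.transpose_mul, Matrix.mul_assoc]
        _ = (ϱ g)ᵀ * Jmat (ZMod (p ^ (m + 1))) * ϱ g := by rw [hinner]
        _ = ((ψ g : (ZMod (p ^ (m + 1)))ˣ) : ZMod (p ^ (m + 1))) • Jmat (ZMod (p ^ (m + 1))) :=
            hν g
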